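/- (Fusion, part 2.) Let ⟨T_n⟩_{n<ω} be a sequence of E0-large trees such that T_{n+1} ⊆_{n+1} T_n for every n < ω, and let T = ⋂_{n<ω} T_n (an E0-large tree). Then for every n < ω and every s ∈ 2^{n+1}: T→s = T ∩ (T_n→s) = ⋂_{m ≥ n} (T_m→s). -/

import Mathlib

namespace E0L

/-- Finite binary strings `2^{<ω}`. -/
abbrev Str : Type := List Bool

/-- Sets of binary strings (in particular, trees). -/
abbrev Tr : Type := Set Str

/-- The action `s·t` of a string on a string:
`(s·t)(k) = t(k) + s(k) mod 2` for `k < min(|s|,|t|)` and `(s·t)(k) = t(k)` otherwise. -/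
def act (s t : Str) : Str := List.ofFn fun k : Fin t.length => Bool.xor (s.getD k false) (t.get k)

/-- The action `s·T` of a string on a set of strings. -/
def actT (s : Str) (T : Tr) : Tr := (act s) '' T

/-- `T ↾ s = {t ∈ T : s ⊆ t or t ⊆ s}`. -/
def restr (T : Tr) (s : Str) : Tr := {t ∈ T | s <+: t ∨ t <+: s}

/-- `[T]`, the set of infinite branches of `T` (as elements of Cantor space `2^ω`). -/
def branches (T : Tr) : Set (ℕ → Bool) := {x | ∀ n : ℕ, (List.ofFn fun k : Fin n => x k) ∈ T}

/-- `T[s] = {t : s ⊆ t or t ⊂ s}`. -/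
def Tbr (s : Str) : Tr := {t | s <+: t ∨ (t <+: s ∧ t ≠ s)}

/-- `LTwit T r q` : the strings `q i n` witness that `T` is an E0-large tree with stem `r`:
`|q^0_n| = |q^1_n| ≥ 1`, `q^i_n(0) = i`, and `T` consists of all initial segments of strings
of the form `r⌢q^{i(0)}_0⌢…⌢q^{i(n)}_n`. -/
def LTwit (T : Tr) (r : Str) (q : ℕ → Bool → Str) : Prop :=
  (∀ n : ℕ, (q n true).length = (q n false).length ∧ 1 ≤ (q n false).length) ∧
  (∀ n : ℕ, ∀ i : Bool, (q n i).head? = some i) ∧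
  T = {t | ∃ n : ℕ, ∃ f : ℕ → Bool,
        t <+: r ++ ((List.range (n+1)).map (fun k => q k (f k))).flatten}

/-- `T` is an E0-large tree (`T ∈ LT`). -/
def IsLT (T : Tr) : Prop := ∃ r q, LTwit T r q

/-- `stem T` : the longest `s ∈ T` with `T = T↾s`. -/
noncomputable def stem (T : Tr) : Str :=
  Classical.epsilon fun s => s ∈ T ∧ restr T s = T ∧ ∀ t ∈ T, restr T t = T → t.length ≤ s.length

/-- The canonical witness `(r, q)` of an E0-large tree. -/
noncomputable def witness (T : Tr) : Str × (ℕ → Bool → Str) :=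
  Classical.epsilon fun rq => LTwit T rq.1 rq.2

/-- Splitting levels computed from a witness: `spl_0 = |r|`, `spl_{n+1} = spl_n + |q^i_n|`. -/
def splN (r : Str) (q : ℕ → Bool → Str) : ℕ → ℕ
  | 0 => r.length
  | n+1 => splN r q n + (q n false).length

/-- `spl T n`, the `n`-th splitting level of an E0-large tree `T`. -/
noncomputable def spl (T : Tr) (n : ℕ) : ℕ := splN (witness T).1 (witness T).2 n

/-- Simple splitting `T→i = T↾(stem(T)⌢i)`. -/
noncomputable def split1 (T : Tr) (i : Bool) : Tr := restr T (stem T ++ [i])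

/-- Iterated splitting `T→s`: `T→Λ = T`, `T→(s⌢i) = (T→s)→i`. -/
noncomputable def splitS (T : Tr) (s : Str) : Tr := s.foldl split1 T

/-- `S ⊆_n T` : `S ⊆ T` and `spl_k(S) = spl_k(T)` for all `k < n`. -/
def subN (n : ℕ) (S T : Tr) : Prop := S ⊆ T ∧ ∀ k < n, spl S k = spl T k

/-- A large-tree forcing notion: a set of E0-large trees closed under restriction
and under the action of strings. -/
def IsLTF (P : Set Tr) : Prop :=
  (∀ T ∈ P, IsLT T) ∧
  (∀ T ∈ P, ∀ u ∈ T, restr T u ∈ P) ∧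
  (∀ T ∈ P, ∀ s : Str, actT s T ∈ P)

/-- `T` is an `n`-collage over `P`: `T ∈ LT` and `T→s ∈ P` for all `s ∈ 2^n`. -/
def IsCollage (P : Set Tr) (n : ℕ) (T : Tr) : Prop :=
  IsLT T ∧ ∀ s : Str, s.length = n → splitS T s ∈ P

/-- `D` is open dense in `P` (as a set of trees). -/
def OpenDense1 (P D : Set Tr) : Prop :=
  D ⊆ P ∧ (∀ S ∈ P, ∃ T ∈ D, T ⊆ S) ∧ (∀ S ∈ P, ∀ T ∈ D, S ⊆ T → S ∈ D)

/-- `⟨T,T'⟩` is a condition of the conditional product `P ×_{E0} P`. -/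
def CondPair (P : Set Tr) (p : Tr × Tr) : Prop :=
  p.1 ∈ P ∧ p.2 ∈ P ∧ ∃ s : Str, actT s p.1 = p.2

/-- Componentwise order on pairs of trees: `p ≤ q`. -/
def pleq (p q : Tr × Tr) : Prop := p.1 ⊆ q.1 ∧ p.2 ⊆ q.2

/-- Compatibility of two conditions in `P ×_{E0} P`. -/
def Compat (P : Set Tr) (p q : Tr × Tr) : Prop :=
  ∃ r : Tr × Tr, CondPair P r ∧ pleq r p ∧ pleq r q

/-- `D` is pre-dense in `P ×_{E0} P`. -/
def PreDense2 (P : Set Tr) (D : Set (Tr × Tr)) : Prop :=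
  ∀ p : Tr × Tr, CondPair P p → ∃ q ∈ D, Compat P p q

/-- `D` is open dense in `P ×_{E0} P`. -/
def OpenDense2 (P : Set Tr) (D : Set (Tr × Tr)) : Prop :=
  D ⊆ {p | CondPair P p} ∧
  (∀ p : Tr × Tr, CondPair P p → ∃ q ∈ D, pleq q p) ∧
  (∀ p : Tr × Tr, CondPair P p → ∀ q ∈ D, pleq p q → p ∈ D)

/-- A `P ×_{E0} P`-real name `c = ⟨C_n^i⟩`. -/
def IsRealName (P : Set Tr) (c : ℕ → Bool → Set (Tr × Tr)) : Prop :=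
  (∀ n : ℕ, ∀ i : Bool, c n i ⊆ {p | CondPair P p}) ∧
  (∀ n : ℕ, PreDense2 P (c n false ∪ c n true)) ∧
  (∀ n : ℕ, ∀ p ∈ c n false, ∀ q ∈ c n true, ¬ Compat P p q)

/-- `p` directly forces `c(n) = i`. -/
def DFVal (c : ℕ → Bool → Set (Tr × Tr)) (p : Tr × Tr) (n : ℕ) (i : Bool) : Prop :=
  ∃ q ∈ c n i, pleq p q

/-- `p` directly forces `s ⊂ c`. -/
def DFPrefix (c : ℕ → Bool → Set (Tr × Tr)) (p : Tr × Tr) (s : Str) : Prop :=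
  ∀ n < s.length, DFVal c p n (s.getD n false)

/-- `p` directly forces `c ∉ [U]`. -/
def DFAvoid (c : ℕ → Bool → Set (Tr × Tr)) (p : Tr × Tr) (U : Tr) : Prop :=
  ∃ s : Str, s ∉ U ∧ DFPrefix c p s

/-- `p` directly forces `c ≠ d`: there are incomparable strings `s, t` such that
`p` directly forces `s ⊂ c` and `t ⊂ d`. -/
def DFNe (c d : ℕ → Bool → Set (Tr × Tr)) (p : Tr × Tr) : Prop :=
  ∃ s t : Str, ¬ s <+: t ∧ ¬ t <+: s ∧ DFPrefix c p s ∧ DFPrefix d p t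

/-- The action `σ·c` of a string on a real name. -/
def actName (σ : Str) (c : ℕ → Bool → Set (Tr × Tr)) : ℕ → Bool → Set (Tr × Tr) :=
  fun n i => if σ.getD n false = true then c n (!i) else c n i

/-- The name `π_left` of the left generic real. -/
def piLeft : ℕ → Bool → Set (Tr × Tr) := fun n i =>
  {p | ∃ s t : Str, s.length = n+1 ∧ t.length = n+1 ∧ s.getD n false = i ∧ p = (Tbr s, Tbr t)}

/-- The name `π_right` of the right generic real. -/
def piRight : ℕ → Bool → Set (Tr × Tr) := fun n i =>
  {p | ∃ s t : Str, s.length = n+1 ∧ t.length = n+1 ∧ t.getD n false = i ∧ p = (Tbr s, Tbr t)}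


section Aux

open List

/-- The node of `T` reached by following the directions `s` through the splitting structure. -/
def bigNode (r : Str) (q : ℕ → Bool → Str) (s : Str) : Str :=
  r ++ ((List.range s.length).map fun k => q k (s.getD k false)).flatten

@[simp] lemma bigNode_nil (r : Str) (q : ℕ → Bool → Str) : bigNode r q [] = r := by
  simp [bigNode]

lemma prefix_append_left {a b : Str} (r : Str) (h : a <+: b) : r ++ a <+: r ++ b := by
  obtain ⟨u, rfl⟩ := h
  exact ⟨u, by simp [List.append_assoc]⟩

lemma prefix_flatten {L₁ L₂ : List Str} (h : L₁ <+: L₂) : L₁.flatten <+: L₂.flatten := by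
  obtain ⟨u, rfl⟩ := h
  exact ⟨u.flatten, List.flatten_append.symm⟩

lemma getD_of_prefix {t u : Str} (h : t <+: u) {k : ℕ} (hk : k < t.length) (d : Bool) :
    u.getD k d = t.getD k d := by
  obtain ⟨v, rfl⟩ := h
  exact List.getD_append t v d k hk

lemma getD_head {l : Str} {i : Bool} (h : l.head? = some i) (r : Str) :
    (r ++ l).getD r.length false = i := by
  obtain ⟨u, rfl⟩ := List.head?_eq_some_iff.1 h
  rw [List.getD_append_right _ _ _ _ (le_refl _)]
  simp

lemma bigNode_snoc (r : Str) (q : ℕ → Bool → Str) (s : Str) (i : Bool) :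
    bigNode r q (s ++ [i]) = bigNode r q s ++ q s.length i := by
  unfold bigNode
  rw [List.length_append, List.length_singleton, List.range_succ, List.map_append,
    List.flatten_append, ← List.append_assoc]
  congr 1
  · congr 2
    apply List.map_congr_left
    intro k hk
    rw [List.mem_range] at hk
    rw [List.getD_append _ _ _ _ hk]
  · simp [List.getD_append_right]

lemma bigNode_mono {s s' : Str} (r : Str) (q : ℕ → Bool → Str) (h : s <+: s') :
    bigNode r q s <+: bigNode r q s' := by
  have h1 : bigNode r q s = r ++ ((List.range s.length).map fun k => q k (s'.getD k false)).flatten := by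
    unfold bigNode
    congr 2
    apply List.map_congr_left
    intro k hk
    rw [List.mem_range] at hk
    rw [getD_of_prefix h hk]
  rw [h1]
  apply prefix_append_left
  apply prefix_flatten
  apply List.IsPrefix.map
  have : List.range s.length = List.take s.length (List.range s'.length) := by
    rw [List.take_range]
    congr 1
    exact (Nat.min_eq_left h.length_le).symm
  rw [this]
  exact List.take_prefix _ _

lemma bigNode_cons (r : Str) (q : ℕ → Bool → Str) (i : Bool) (s : Str) :
    bigNode r q (i :: s) = bigNode (r ++ q 0 i) (fun n => q (n+1)) s := by
  unfold bigNode
  rw [List.length_cons, List.range_succ_eq_map, List.map_cons, List.map_map,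
    List.flatten_cons, List.append_assoc]
  rfl

lemma length_q {q : ℕ → Bool → Str} (hlen : ∀ n : ℕ, (q n true).length = (q n false).length)
    (n : ℕ) (i : Bool) : (q n i).length = (q n false).length := by
  cases i
  · rfl
  · exact hlen n

lemma length_bigNode {q : ℕ → Bool → Str} (r : Str)
    (hlen : ∀ n : ℕ, (q n true).length = (q n false).length) (s : Str) :
    (bigNode r q s).length = splN r q s.length := by
  induction s using List.reverseRecOn with
  | nil => simp [splN]
  | append_singleton s i ih =>
      rw [bigNode_snoc, List.length_append, ih, List.length_append, List.length_singleton,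
        length_q hlen]
      rfl

lemma le_splN {q : ℕ → Bool → Str} (r : Str)
    (hlen1 : ∀ n : ℕ, 1 ≤ (q n false).length) : ∀ k, k ≤ splN r q k := by
  intro k
  induction k with
  | zero => exact Nat.zero_le _
  | succ k ih =>
      have := hlen1 k
      show k + 1 ≤ splN r q k + (q k false).length
      omega

/-- The set generated by `(r, q)` in the `LTwit` form equals the `bigNode` form. -/
lemma gen_eq (r : Str) (q : ℕ → Bool → Str) :
    {t : Str | ∃ n : ℕ, ∃ f : ℕ → Bool,
        t <+: r ++ ((List.range (n+1)).map (fun k => q k (f k))).flatten} =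
    {t : Str | ∃ s : Str, t <+: bigNode r q s} := by
  ext t
  simp only [Set.mem_setOf_eq]
  constructor
  · rintro ⟨n, f, hp⟩
    refine ⟨List.ofFn (fun k : Fin (n+1) => f k), ?_⟩
    have : bigNode r q (List.ofFn (fun k : Fin (n+1) => f k)) =
        r ++ ((List.range (n+1)).map (fun k => q k (f k))).flatten := by
      unfold bigNode
      rw [List.length_ofFn]
      congr 2
      apply List.map_congr_left
      intro k hk
      rw [List.mem_range] at hk
      congr 1
      rw [List.getD_eq_getElem _ _ (by simpa using hk), List.getElem_ofFn]
    rw [this]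
    exact hp
  · rintro ⟨s, hp⟩
    refine ⟨s.length, fun k => s.getD k false, ?_⟩
    apply hp.trans
    rw [List.range_succ, List.map_append, List.flatten_append, ← List.append_assoc]
    exact List.prefix_append _ _

lemma LTwit.mem_iff {T : Tr} {r : Str} {q : ℕ → Bool → Str} (h : LTwit T r q) {t : Str} :
    t ∈ T ↔ ∃ s : Str, t <+: bigNode r q s := by
  conv_lhs => rw [h.2.2]
  rw [gen_eq]
  rfl

lemma LTwit.bigNode_mem {T : Tr} {r : Str} {q : ℕ → Bool → Str} (h : LTwit T r q) (s : Str) :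
    bigNode r q s ∈ T := h.mem_iff.2 ⟨s, List.prefix_refl _⟩

lemma LTwit.prefix_mem {T : Tr} {r : Str} {q : ℕ → Bool → Str} (h : LTwit T r q) {t t' : Str}
    (ht' : t' ∈ T) (ht : t <+: t') : t ∈ T := by
  obtain ⟨s, hp⟩ := h.mem_iff.1 ht'
  exact h.mem_iff.2 ⟨s, ht.trans hp⟩

end Aux

section Aux2

lemma restr_mem_iff {T : Tr} {u t : Str} :
    t ∈ restr T u ↔ t ∈ T ∧ (u <+: t ∨ t <+: u) := Iff.rfl

lemma LTwit.restr_stem {T : Tr} {r : Str} {q : ℕ → Bool → Str} (h : LTwit T r q) :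
    restr T r = T := by
  ext t
  rw [restr_mem_iff]
  constructor
  · exact fun ht => ht.1
  · intro ht
    refine ⟨ht, ?_⟩
    obtain ⟨s, hp⟩ := h.mem_iff.1 ht
    have hr : r <+: bigNode r q s := by
      have := bigNode_mono r q (List.nil_prefix (l := s))
      rwa [bigNode_nil] at this
    exact (List.prefix_or_prefix_of_prefix hr hp)

lemma LTwit.head_cons {T : Tr} {r : Str} {q : ℕ → Bool → Str} (h : LTwit T r q)
    (n : ℕ) (i : Bool) : ∃ u, q n i = i :: u := List.head?_eq_some_iff.1 (h.2.1 n i)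

/-- key: the character of `bigNode r q (j :: s)` at position `r.length` is `j`. -/
lemma LTwit.getD_cons {T : Tr} {r : Str} {q : ℕ → Bool → Str} (h : LTwit T r q)
    (j : Bool) (s : Str) : (bigNode r q (j :: s)).getD r.length false = j := by
  have h1 : r ++ q 0 j <+: bigNode r q (j :: s) := by
    have := bigNode_mono (r ++ q 0 j) (fun n => q (n+1)) (List.nil_prefix (l := s))
    rw [bigNode_nil, ← bigNode_cons] at this
    exact this
  have h2 : r.length < (r ++ q 0 j).length := by
    have := (h.1 0).2
    have := length_q (fun n => (h.1 n).1) 0 j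
    simp only [List.length_append]
    omega
  rw [getD_of_prefix h1 h2, getD_head (h.2.1 0 j)]

lemma LTwit.stem_eq {T : Tr} {r : Str} {q : ℕ → Bool → Str} (h : LTwit T r q) :
    stem T = r := by
  have hmax : ∀ t ∈ T, restr T t = T → t.length ≤ r.length := by
    intro t ht hre
    by_contra hgt
    push_neg at hgt
    obtain ⟨s₀, hp⟩ := h.mem_iff.1 ht
    -- s₀ is nonempty
    obtain ⟨j, s₁, rfl⟩ : ∃ j s₁, s₀ = j :: s₁ := by
      cases s₀ with
      | nil =>
          exfalso
          rw [bigNode_nil] at hp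
          exact absurd hp.length_le (by omega)
      | cons j s₁ => exact ⟨j, s₁, rfl⟩
    have htc : t.getD r.length false = j := by
      rw [← getD_of_prefix hp hgt]
      exact h.getD_cons j s₁
    -- the witness incomparable with t
    set w := bigNode r q [!j] with hw
    have hwT : w ∈ T := h.bigNode_mem _
    have hwc : w.getD r.length false = !j := h.getD_cons (!j) []
    have hwlen : r.length < w.length := by
      rw [hw, length_bigNode r (fun n => (h.1 n).1)]
      have := (h.1 0).2
      show r.length < splN r q 1
      show r.length < r.length + (q 0 false).length
      omega
    have hcomp : t <+: w ∨ w <+: t := by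
      have : w ∈ restr T t := by rw [hre]; exact hwT
      exact this.2
    rcases hcomp with hc | hc
    · rw [getD_of_prefix hc hgt] at hwc
      rw [htc] at hwc
      simp at hwc
    · rw [getD_of_prefix hc hwlen] at htc
      rw [hwc] at htc
      simp at htc
  have Pr : r ∈ T ∧ restr T r = T ∧ ∀ t ∈ T, restr T t = T → t.length ≤ r.length := by
    refine ⟨?_, h.restr_stem, hmax⟩
    have := h.bigNode_mem []
    rwa [bigNode_nil] at this
  have hs := Classical.epsilon_spec
    (p := fun s => s ∈ T ∧ restr T s = T ∧ ∀ t ∈ T, restr T t = T → t.length ≤ s.length)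
    ⟨r, Pr⟩
  have hs' : (stem T) ∈ T ∧ restr T (stem T) = T ∧
      ∀ t ∈ T, restr T t = T → t.length ≤ (stem T).length := hs
  have hlen1 : (stem T).length ≤ r.length := hmax _ hs'.1 hs'.2.1
  have hlen2 : r.length ≤ (stem T).length := hs'.2.2 r Pr.1 Pr.2.1
  have hcomp : stem T <+: r ∨ r <+: stem T := by
    have : r ∈ restr T (stem T) := by rw [hs'.2.1]; exact Pr.1
    exact this.2
  rcases hcomp with hc | hc
  · exact hc.eq_of_length (by omega)
  · exact (hc.eq_of_length (by omega)).symm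

lemma restr_restr {T : Tr} {u v : Str} (h : u <+: v) :
    restr (restr T u) v = restr T v := by
  ext t
  simp only [restr_mem_iff]
  constructor
  · rintro ⟨⟨ht, _⟩, hc⟩
    exact ⟨ht, hc⟩
  · rintro ⟨ht, hc⟩
    refine ⟨⟨ht, ?_⟩, hc⟩
    rcases hc with hc | hc
    · exact Or.inl (h.trans hc)
    · exact List.prefix_or_prefix_of_prefix h hc

lemma LTwit.split1_wit {T : Tr} {r : Str} {q : ℕ → Bool → Str} (h : LTwit T r q) (i : Bool) :
    LTwit (split1 T i) (r ++ q 0 i) (fun n => q (n+1)) := by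
  refine ⟨fun n => h.1 (n+1), fun n j => h.2.1 (n+1) j, ?_⟩
  rw [gen_eq]
  have hsp : split1 T i = restr T (r ++ [i]) := by
    unfold split1
    rw [h.stem_eq]
  rw [hsp]
  have hpq : r ++ [i] <+: r ++ q 0 i := by
    apply prefix_append_left
    obtain ⟨u, hu⟩ := h.head_cons 0 i
    exact ⟨u, by rw [hu]; rfl⟩
  ext t
  rw [restr_mem_iff]
  simp only [Set.mem_setOf_eq]
  constructor
  · rintro ⟨ht, hc⟩
    obtain ⟨s₀, hp⟩ := h.mem_iff.1 ht
    rcases hc with hc | hc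
    · -- r ++ [i] <+: t
      obtain ⟨j, s₁, rfl⟩ : ∃ j s₁, s₀ = j :: s₁ := by
        cases s₀ with
        | nil =>
            exfalso
            rw [bigNode_nil] at hp
            have h1 := hc.length_le
            have h2 := hp.length_le
            simp at h1
            omega
        | cons j s₁ => exact ⟨j, s₁, rfl⟩
      have hlt : r.length < t.length := by
        have := hc.length_le
        simp at this
        omega
      have hji : j = i := by
        have h1 : t.getD r.length false = j := by
          rw [← getD_of_prefix hp hlt]
          exact h.getD_cons j s₁
        have h2 : t.getD r.length false = i := by
          rw [getD_of_prefix hc (by simp : r.length < (r ++ [i]).length),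
            getD_head (by rfl : ([i] : Str).head? = some i)]
        exact h1.symm.trans h2
      subst hji
      rw [bigNode_cons] at hp
      exact ⟨s₁, hp⟩
    · -- t <+: r ++ [i]
      refine ⟨[], ?_⟩
      rw [bigNode_nil]
      exact hc.trans hpq
  · rintro ⟨s, hp⟩
    rw [← bigNode_cons] at hp
    refine ⟨h.mem_iff.2 ⟨i :: s, hp⟩, ?_⟩
    have hri : r ++ [i] <+: bigNode r q (i :: s) := by
      apply hpq.trans
      have := bigNode_mono r q (show [i] <+: i :: s from ⟨s, rfl⟩)
      rwa [show bigNode r q [i] = r ++ q 0 i by rw [← bigNode_nil (r ++ q 0 i) (fun n => q (n+1)), ← bigNode_cons]] at this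
    exact List.prefix_or_prefix_of_prefix hri hp

end Aux2

section Aux3

lemma splitS_wit : ∀ (s : Str) (T : Tr) (r : Str) (q : ℕ → Bool → Str), LTwit T r q →
    LTwit (splitS T s) (bigNode r q s) (fun n => q (n + s.length)) ∧
    splitS T s = restr T (bigNode r q s) := by
  intro s
  induction s with
  | nil =>
      intro T r q h
      constructor
      · rw [bigNode_nil]
        exact h
      · rw [bigNode_nil]
        exact h.restr_stem.symm
  | cons i s' ih =>
      intro T r q h
      have h1 := h.split1_wit i
      obtain ⟨w1, w2⟩ := ih (split1 T i) (r ++ q 0 i) (fun n => q (n+1)) h1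
      rw [← bigNode_cons] at w1 w2
      have hsp : splitS T (i :: s') = splitS (split1 T i) s' := rfl
      have hri : r ++ [i] <+: bigNode r q (i :: s') := by
        have hpq : r ++ [i] <+: r ++ q 0 i := by
          apply prefix_append_left
          obtain ⟨u, hu⟩ := h.head_cons 0 i
          exact ⟨u, by rw [hu]; rfl⟩
        apply hpq.trans
        have := bigNode_mono (r ++ q 0 i) (fun n => q (n+1)) (List.nil_prefix (l := s'))
        rwa [bigNode_nil, ← bigNode_cons] at this
      constructor
      · rw [hsp]
        exact w1
      · rw [hsp, w2]
        have hsp1 : split1 T i = restr T (r ++ [i]) := by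
          unfold split1
          rw [h.stem_eq]
        rw [hsp1, restr_restr hri]

lemma LTwit.splitS_snoc {T : Tr} {r : Str} {q : ℕ → Bool → Str} (h : LTwit T r q)
    (s : Str) (i : Bool) : splitS T (s ++ [i]) = restr T (bigNode r q s ++ [i]) := by
  obtain ⟨w1, w2⟩ := splitS_wit s T r q h
  have hfold : splitS T (s ++ [i]) = split1 (splitS T s) i := by
    unfold splitS
    rw [List.foldl_append]
    rfl
  rw [hfold]
  unfold split1
  rw [w1.stem_eq, w2, restr_restr (List.prefix_append _ _)]

lemma LTwit.mem_level {T : Tr} {r : Str} {q : ℕ → Bool → Str} (h : LTwit T r q) {t : Str}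
    {k : ℕ} (ht : t ∈ T) (hl : t.length = splN r q k) :
    ∃ s : Str, s.length = k ∧ t = bigNode r q s := by
  obtain ⟨s₀, hp⟩ := h.mem_iff.1 ht
  set s₁ := s₀ ++ List.replicate k false with hs₁
  have hks : k ≤ s₁.length := by simp [hs₁]
  have hp1 : t <+: bigNode r q s₁ := hp.trans (bigNode_mono r q (List.prefix_append _ _))
  refine ⟨s₁.take k, by rw [List.length_take]; omega, ?_⟩
  have h2 : bigNode r q (s₁.take k) <+: bigNode r q s₁ := bigNode_mono r q (List.take_prefix _ _)
  have hlen2 : (bigNode r q (s₁.take k)).length = splN r q k := by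
    rw [length_bigNode r (fun n => (h.1 n).1), List.length_take]
    congr 1
    omega
  rcases List.prefix_or_prefix_of_prefix hp1 h2 with h3 | h3
  · exact h3.eq_of_length (by omega)
  · exact (h3.eq_of_length (by omega)).symm

end Aux3

/-- Lemma `fus`(2), fusion: if `T_{n+1} ⊆_{n+1} T_n` for all `n`, all
E0-large, and `T = ⋂_n T_n`, then for every `n` and `s ∈ 2^{n+1}`:
`T→s = T ∩ (T_n→s) = ⋂_{m ≥ n} (T_m→s)`. -/
theorem stmt11 (T : ℕ → Tr) (hLT : ∀ n : ℕ, IsLT (T n))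
    (hsub : ∀ n : ℕ, subN (n+1) (T (n+1)) (T n)) :
    ∀ n : ℕ, ∀ s : Str, s.length = n + 1 →
      splitS (⋂ k, T k) s = (⋂ k, T k) ∩ splitS (T n) s ∧
      splitS (⋂ k, T k) s = ⋂ m, ⋂ (_ : n ≤ m), splitS (T m) s := by
  classical
  -- the chosen witnesses
  have hwit : ∀ m, LTwit (T m) (witness (T m)).1 (witness (T m)).2 := by
    intro m
    obtain ⟨r, q, h⟩ := hLT m
    exact Classical.epsilon_spec
      (p := fun rq : Str × (ℕ → Bool → Str) => LTwit (T m) rq.1 rq.2) ⟨(r, q), h⟩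
  set R : ℕ → Str := fun m => (witness (T m)).1 with hR
  set q : ℕ → ℕ → Bool → Str := fun m => (witness (T m)).2 with hq
  have hsubs : ∀ m, T (m+1) ⊆ T m := fun m => (hsub m).1
  have hmono : ∀ j m, j ≤ m → T m ⊆ T j := by
    intro j m h
    induction m, h using Nat.le_induction with
    | base => exact subset_rfl
    | succ m hm ih => exact (hsubs m).trans ih
  have hlev : ∀ m k, k ≤ m → splN (R (m+1)) (q (m+1)) k = splN (R m) (q m) k := by
    intro m k hk
    exact (hsub m).2 k (by omega)
  -- one step of node stability together with block stability
  have blockstep : ∀ m (s : Str) (i : Bool), s.length < m →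
      bigNode (R (m+1)) (q (m+1)) s = bigNode (R m) (q m) s →
      bigNode (R (m+1)) (q (m+1)) (s ++ [i]) = bigNode (R m) (q m) (s ++ [i]) ∧
      q (m+1) s.length i = q m s.length i := by
    intro m s i hlt heq
    have hmem : bigNode (R (m+1)) (q (m+1)) (s ++ [i]) ∈ T m :=
      hsubs m ((hwit (m+1)).bigNode_mem _)
    have hlen : (bigNode (R (m+1)) (q (m+1)) (s ++ [i])).length = splN (R m) (q m) (s.length+1) := by
      rw [length_bigNode _ (fun n => ((hwit (m+1)).1 n).1), List.length_append,
        List.length_singleton]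
      exact hlev m (s.length+1) (by omega)
    obtain ⟨s', hs', heq'⟩ := (hwit m).mem_level hmem hlen
    have hne : s' ≠ [] := by
      intro hcon
      rw [hcon] at hs'
      simp at hs'
    obtain ⟨s₂, j, rfl⟩ : ∃ s₂ j, s' = s₂ ++ [j] :=
      ⟨s'.dropLast, s'.getLast hne, (List.dropLast_append_getLast hne).symm⟩
    have hs₂ : s₂.length = s.length := by
      rw [List.length_append, List.length_singleton] at hs'
      omega
    rw [bigNode_snoc, bigNode_snoc, heq] at heq'
    have hlens : (bigNode (R m) (q m) s).length = (bigNode (R m) (q m) s₂).length := by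
      rw [length_bigNode _ (fun n => ((hwit m).1 n).1), length_bigNode _ (fun n => ((hwit m).1 n).1), hs₂]
    obtain ⟨hB, hqe⟩ := List.append_inj heq' hlens
    have hqe' : q (m+1) s.length i = q m s₂.length j := hqe
    have hj : j = i := by
      have h1 : (q (m+1) s.length i).head? = some i := (hwit (m+1)).2.1 s.length i
      have h2 : (q m s₂.length j).head? = some j := (hwit m).2.1 s₂.length j
      rw [hqe'] at h1
      rw [h1] at h2
      exact (Option.some.inj h2).symm
    subst hj
    rw [hs₂] at hqe'
    constructor
    · rw [bigNode_snoc, bigNode_snoc, heq, hqe']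
    · exact hqe'
  have nodestep : ∀ m (s : Str), s.length ≤ m →
      bigNode (R (m+1)) (q (m+1)) s = bigNode (R m) (q m) s := by
    intro m s
    induction s using List.reverseRecOn with
    | nil =>
        intro _
        rw [bigNode_nil, bigNode_nil]
        have hmem : R (m+1) ∈ T m := by
          have := (hwit (m+1)).bigNode_mem []
          rw [bigNode_nil] at this
          exact hsubs m this
        have hlen0 : (R (m+1)).length = splN (R m) (q m) 0 := by
          have : (R (m+1)).length = splN (R (m+1)) (q (m+1)) 0 := rfl
          rw [this]
          exact hlev m 0 (by omega)
        obtain ⟨s', hs', heq⟩ := (hwit m).mem_level hmem hlen0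
        rw [List.length_eq_zero_iff.mp hs'] at heq
        rw [heq, bigNode_nil]
    | append_singleton s i ih =>
        intro hle
        rw [List.length_append, List.length_singleton] at hle
        exact (blockstep m s i (by omega) (ih (by omega))).1
  have nodechain : ∀ (s : Str) (m m' : ℕ), m ≤ m' → s.length ≤ m →
      bigNode (R m') (q m') s = bigNode (R m) (q m) s := by
    intro s m m' h
    induction m', h using Nat.le_induction with
    | base => intro _; rfl
    | succ m' hm ih =>
        intro hs
        rw [nodestep m' s (by omega), ih hs]
  have blockchain : ∀ (k m : ℕ) (i : Bool), k < m → q m k i = q (k+1) k i := by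
    intro k m i h
    induction m, h using Nat.le_induction with
    | base => rfl
    | succ m hm ih =>
        have h1 := (blockstep m (List.replicate k false) i
          (by rw [List.length_replicate]; omega)
          (nodestep m (List.replicate k false) (by rw [List.length_replicate]; omega))).2
        rw [List.length_replicate] at h1
        rw [h1]
        exact ih
  set Q : ℕ → Bool → Str := fun k => q (k+1) k with hQ
  have nodeQ : ∀ (s : Str) (m : ℕ), s.length ≤ m →
      bigNode (R m) (q m) s = bigNode (R 0) Q s := by
    intro s m hs
    rw [nodechain s s.length m hs le_rfl]
    have hr0 : R s.length = R 0 := by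
      have := nodechain [] 0 s.length (by omega) (by simp)
      rwa [bigNode_nil, bigNode_nil] at this
    unfold bigNode
    rw [hr0]
    congr 2
    apply List.map_congr_left
    intro k hk
    rw [List.mem_range] at hk
    exact blockchain k s.length _ hk
  -- the intersection is an E0-large tree with witness (R 0, Q)
  have hWwit : LTwit (⋂ k, T k) (R 0) Q := by
    refine ⟨fun k => (hwit (k+1)).1 k, fun k i => (hwit (k+1)).2.1 k i, ?_⟩
    rw [gen_eq]
    ext t
    simp only [Set.mem_iInter, Set.mem_setOf_eq]
    constructor
    · intro ht
      obtain ⟨s₀, hp⟩ := (hwit t.length).mem_iff.1 (ht t.length)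
      refine ⟨s₀.take t.length, ?_⟩
      have hlt : (s₀.take t.length).length ≤ t.length := by
        rw [List.length_take]; omega
      rw [← nodeQ _ t.length hlt]
      by_cases hc : s₀.length ≤ t.length
      · rwa [List.take_of_length_le hc]
      · have h2 : bigNode (R t.length) (q t.length) (s₀.take t.length) <+:
            bigNode (R t.length) (q t.length) s₀ := bigNode_mono _ _ (List.take_prefix _ _)
        have hl : t.length ≤ (bigNode (R t.length) (q t.length) (s₀.take t.length)).length := by
          rw [length_bigNode _ (fun n => ((hwit t.length).1 n).1), List.length_take]
          have h3 := le_splN (R t.length) (fun n => ((hwit t.length).1 n).2) t.length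
          have h4 : min t.length s₀.length = t.length := by omega
          rw [h4]
          exact h3
        rcases List.prefix_or_prefix_of_prefix hp h2 with h3 | h3
        · exact h3
        · have he : bigNode (R t.length) (q t.length) (s₀.take t.length) = t :=
            h3.eq_of_length (by have := h3.length_le; omega)
          rw [he]
    · rintro ⟨s, hp⟩ j
      have hm : bigNode (R 0) Q s = bigNode (R (max j s.length)) (q (max j s.length)) s :=
        (nodeQ s _ (le_max_right _ _)).symm
      rw [hm] at hp
      exact hmono j (max j s.length) (le_max_left _ _)
        ((hwit _).prefix_mem ((hwit _).bigNode_mem s) hp)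
  -- the endgame
  intro n s hs
  have hne : s ≠ [] := by
    intro hcon
    rw [hcon] at hs
    simp at hs
  obtain ⟨s', i, rfl⟩ : ∃ s' i, s = s' ++ [i] :=
    ⟨s.dropLast, s.getLast hne, (List.dropLast_append_getLast hne).symm⟩
  have hs' : s'.length = n := by
    rw [List.length_append, List.length_singleton] at hs
    omega
  have eqW : splitS (⋂ k, T k) (s' ++ [i]) = restr (⋂ k, T k) (bigNode (R 0) Q s' ++ [i]) :=
    hWwit.splitS_snoc s' i
  have eqm : ∀ m, n ≤ m →
      splitS (T m) (s' ++ [i]) = restr (T m) (bigNode (R 0) Q s' ++ [i]) := by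
    intro m hm
    rw [(hwit m).splitS_snoc s' i, nodeQ s' m (by omega)]
  have hWsub : ∀ k, (⋂ k, T k) ⊆ T k := fun k => Set.iInter_subset _ k
  constructor
  · rw [eqW, eqm n le_rfl]
    ext t
    simp only [restr_mem_iff, Set.mem_inter_iff]
    constructor
    · rintro ⟨h1, h2⟩
      exact ⟨h1, hWsub n h1, h2⟩
    · rintro ⟨h1, _, h2⟩
      exact ⟨h1, h2⟩
  · rw [eqW]
    ext t
    simp only [restr_mem_iff, Set.mem_iInter]
    constructor
    · rintro ⟨h1, h2⟩ m hm
      rw [eqm m hm, restr_mem_iff]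
      exact ⟨hWsub m (Set.mem_iInter.2 h1), h2⟩
    · intro hmem
      have h1 : ∀ k, t ∈ T k := by
        intro k
        have := hmem (max k n) (le_max_right _ _)
        rw [eqm _ (le_max_right _ _), restr_mem_iff] at this
        exact hmono k (max k n) (le_max_left _ _) this.1
      have h2 := hmem n le_rfl
      rw [eqm n le_rfl, restr_mem_iff] at h2
      exact ⟨h1, h2.2⟩

end E0L
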